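/- Let m ≥ 1 and a > 0 with sin(πn/a) ≠ 0 for n = 1,…,m−1, and let x₁, x₂ ∈ ℂ with x₁ ≠ x₂ mod i·ℤ + a·ℤ (so all denominators are nonzero). Define, for l = 0,…,m−1, φ_{2,l}(x) = (2a(−i)^m / ∏_{n≠l, 0≤n≤m−1} 2 sin(π(n−l)/a)) · 1/∏_{n=0}^{m−1} 2 sinh(π(x₂−x₁+i(n−l))/a). Then φ_{2,l}(x₂,x₁) = −φ_{2,m−1−l}(x₁,x₂); i.e., swapping x₁ and x₂ maps the coefficient of index l to minus the coefficient of index m−1−l. -/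
import Mathlib


open Complex Real Finset

/-- Let `m ≥ 1`, `a > 0` with `sin(πn/a) ≠ 0` for `n = 1,…,m−1`, and `x₁ ≠ x₂ mod i(ℤ + aℤ)`
(so all denominators are nonzero). For `l = 0,…,m−1` let
`φ_{2,l}(x₁,x₂) = (2a(−i)^m / ∏_{n≠l} 2 sin(π(n−l)/a)) · 1/∏_{n=0}^{m−1} 2 sinh(π(x₂−x₁+i(n−l))/a)`.
Then `φ_{2,l}(x₂,x₁) = −φ_{2,m−1−l}(x₁,x₂)`. -/
theorem stmt11 (m : ℕ) (hm : 1 ≤ m) (a : ℝ) (ha : 0 < a)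
    (hsin : ∀ n ∈ Finset.Icc 1 (m - 1), Real.sin (Real.pi * n / a) ≠ 0)
    (x₁ x₂ : ℂ) (hx : ∀ p q : ℤ, x₁ - x₂ ≠ Complex.I * ((p : ℂ) + (q : ℂ) * a))
    (φ : ℕ → ℂ → ℂ → ℂ)
    (hφ : ∀ (l : ℕ) (u v : ℂ), φ l u v =
      (2 * (a : ℂ) * (-Complex.I) ^ m /
          ∏ n ∈ (Finset.range m).filter (fun n => n ≠ l),
            (2 * (Real.sin (Real.pi * ((n : ℝ) - (l : ℝ)) / a) : ℂ))) *
        (1 / ∏ n ∈ Finset.range m,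
            2 * Complex.sinh (Real.pi * (v - u + Complex.I * ((n : ℂ) - (l : ℂ))) / a))) :
    ∀ l < m, φ l x₂ x₁ = - φ (m - 1 - l) x₁ x₂ := by
  intro l hl
  have hl' : l ≤ m - 1 := Nat.le_sub_one_of_lt hl
  have hl'' : m - 1 - l < m := by omega
  rw [hφ, hφ]
  -- sinh product reindexing
  have hQ : (∏ n ∈ Finset.range m,
        2 * Complex.sinh (Real.pi * (x₂ - x₁ + Complex.I * ((n : ℂ) - ((m - 1 - l : ℕ) : ℂ))) / a))
      = (-1) ^ m * ∏ n ∈ Finset.range m,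
        2 * Complex.sinh (Real.pi * (x₁ - x₂ + Complex.I * ((n : ℂ) - (l : ℂ))) / a) := by
    rw [← Finset.prod_range_reflect
      (fun n => 2 * Complex.sinh (Real.pi * (x₁ - x₂ + Complex.I * ((n : ℂ) - (l : ℂ))) / a)) m]
    rw [show ((-1 : ℂ)) ^ m = ∏ _n ∈ Finset.range m, (-1 : ℂ) by simp]
    rw [← Finset.prod_mul_distrib]
    refine Finset.prod_congr rfl (fun n hn => ?_)
    have hn' : n ≤ m - 1 := Nat.le_sub_one_of_lt (Finset.mem_range.mp hn)
    have c1 : ((m - 1 - l : ℕ) : ℂ) = ((m - 1 : ℕ) : ℂ) - (l : ℂ) := by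
      rw [Nat.cast_sub hl']
    have c2 : ((m - 1 - n : ℕ) : ℂ) = ((m - 1 : ℕ) : ℂ) - (n : ℂ) := by
      rw [Nat.cast_sub hn']
    rw [c1, c2,
      show Real.pi * (x₂ - x₁ + Complex.I * ((n : ℂ) - (((m - 1 : ℕ) : ℂ) - (l : ℂ)))) / a
        = -(Real.pi * (x₁ - x₂ + Complex.I * ((((m - 1 : ℕ) : ℂ) - (n : ℂ)) - (l : ℂ))) / a) by ring]
    rw [Complex.sinh_neg]; ring
  -- sin product reindexing
  have hP : (∏ n ∈ (Finset.range m).filter (fun n => n ≠ m - 1 - l),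
        (2 * (Real.sin (Real.pi * ((n : ℝ) - ((m - 1 - l : ℕ) : ℝ)) / a) : ℂ)))
      = (-1) ^ (m - 1) * ∏ n ∈ (Finset.range m).filter (fun n => n ≠ l),
        (2 * (Real.sin (Real.pi * ((n : ℝ) - (l : ℝ)) / a) : ℂ)) := by
    rw [Finset.prod_filter, Finset.prod_filter]
    rw [← Finset.prod_range_reflect
      (fun n => if n ≠ l then (2 * (Real.sin (Real.pi * ((n : ℝ) - (l : ℝ)) / a) : ℂ)) else 1) m]
    have hcard : ((Finset.range m).filter (fun n => n ≠ m - 1 - l)).card = m - 1 := by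
      rw [Finset.filter_ne', Finset.card_erase_of_mem (Finset.mem_range.mpr hl''),
        Finset.card_range]
    have hpow : ((-1 : ℂ)) ^ (m - 1)
        = ∏ n ∈ Finset.range m, (if n ≠ m - 1 - l then (-1 : ℂ) else 1) := by
      rw [Finset.prod_ite, Finset.prod_const, Finset.prod_const, one_pow, mul_one, hcard]
    rw [hpow, ← Finset.prod_mul_distrib]
    refine Finset.prod_congr rfl (fun n hn => ?_)
    have hn' : n ≤ m - 1 := Nat.le_sub_one_of_lt (Finset.mem_range.mp hn)
    have hiff : (m - 1 - n ≠ l) ↔ (n ≠ m - 1 - l) := by omega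
    by_cases h : n = m - 1 - l
    · have h2 : m - 1 - n = l := by omega
      simp [h, h2, Nat.sub_sub_self hl']
    · have h2 : m - 1 - n ≠ l := by omega
      rw [if_pos h2]
      simp only [if_pos h]
      have c1 : ((m - 1 - l : ℕ) : ℝ) = ((m - 1 : ℕ) : ℝ) - (l : ℝ) := by
        rw [Nat.cast_sub hl']
      have c2 : ((m - 1 - n : ℕ) : ℝ) = ((m - 1 : ℕ) : ℝ) - (n : ℝ) := by
        rw [Nat.cast_sub hn']
      rw [c1, c2,
        show Real.pi * ((n : ℝ) - (((m - 1 : ℕ) : ℝ) - (l : ℝ))) / a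
          = -(Real.pi * ((((m - 1 : ℕ) : ℝ) - (n : ℝ)) - (l : ℝ)) / a) by ring]
      rw [Real.sin_neg]
      push_cast
      ring
  rw [hP, hQ]
  set C : ℂ := 2 * (a : ℂ) * (-Complex.I) ^ m
  set P : ℂ := ∏ n ∈ (Finset.range m).filter (fun n => n ≠ l),
        (2 * (Real.sin (Real.pi * ((n : ℝ) - (l : ℝ)) / a) : ℂ))
  set Q : ℂ := ∏ n ∈ Finset.range m,
        2 * Complex.sinh (Real.pi * (x₁ - x₂ + Complex.I * ((n : ℂ) - (l : ℂ))) / a)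
  set e : ℂ := (-1) ^ (m - 1) with he
  set f : ℂ := (-1) ^ m with hf
  have hef : e * f = -1 := by
    rw [he, hf, ← pow_add]; exact Odd.neg_one_pow ⟨m - 1, by omega⟩
  have hee : e * e = 1 := by rw [he, ← pow_add]; exact Even.neg_one_pow ⟨m - 1, rfl⟩
  have hff : f * f = 1 := by rw [hf, ← pow_add]; exact Even.neg_one_pow ⟨m, rfl⟩
  have hei : e⁻¹ = e := inv_eq_of_mul_eq_one_right hee
  have hfi : f⁻¹ = f := inv_eq_of_mul_eq_one_right hff
  simp only [div_eq_mul_inv, mul_inv, one_mul, hei, hfi]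
  linear_combination (C * P⁻¹ * Q⁻¹) * hef
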